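/- (Theorem 1) Let G=(V,E) be a graph of convex sets with origin s and destination d, suppose there exists at least one path from s to d, let h be an admissible heuristic, and let S be any cut-set (so N_S ≠ ∅). Then C_opt(s,d) ≥ R*_opt(S, N_S). -/

import Mathlib

open scoped BigOperators Pointwise Classical

noncomputable section

/-- A graph of convex sets: a finite directed edge set together with a nonempty
compact convex set in `ℝ^n` attached to each vertex. -/
structure GCS (V : Type*) (n : ℕ) where
  E : Finset (V × V)
  X : V → Set (EuclideanSpace ℝ (Fin n))
  nonempty : ∀ v, (X v).Nonempty
  compact : ∀ v, IsCompact (X v)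
  convex : ∀ v, Convex ℝ (X v)

/-- The cost of a path of `k` vertices with chosen points `x 0, …, x (k-1)`. -/
def pathCost {n : ℕ} (k : ℕ) (x : ℕ → EuclideanSpace ℝ (Fin n)) : ℝ :=
  ∑ i ∈ Finset.range (k - 1), ‖x i - x (i + 1)‖

namespace GCS

variable {V : Type*} {n : ℕ}

/-- `(v 0, …, v (k-1))` is a path in `G` with chosen points `x i ∈ X (v i)`. -/
def IsPathOn (G : GCS V n) (k : ℕ) (v : ℕ → V) (x : ℕ → EuclideanSpace ℝ (Fin n)) : Prop :=
  1 ≤ k ∧ (∀ i, i + 1 < k → (v i, v (i + 1)) ∈ G.E) ∧ ∀ i, i < k → x i ∈ G.X (v i)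

/-- `C_opt(a,b)`: the infimum of path costs over all paths from `a` to `b`
and all choices of points (`⊤` if no such path exists). -/
def Copt (G : GCS V n) (a b : V) : EReal :=
  sInf {c : EReal | ∃ (k : ℕ) (v : ℕ → V) (x : ℕ → EuclideanSpace ℝ (Fin n)),
    G.IsPathOn k v x ∧ v 0 = a ∧ v (k - 1) = b ∧ c = ((pathCost k x : ℝ) : EReal)}

/-- A heuristic `h` is admissible for destination `d`. -/
def Admissible (G : GCS V n) (d : V) (h : V → ℝ) : Prop :=
  h d = 0 ∧ ∀ v : V, (h v : EReal) ≤ G.Copt v d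

/-- The neighborhood `N_S` of a set `S` of vertices. -/
def nbr [Fintype V] (G : GCS V n) (S : Finset V) : Finset V :=
  Finset.univ.filter fun v => v ∉ S ∧ ∃ u ∈ S, (u, v) ∈ G.E

/-- `C*_opt(S,S')`: the infimum over all paths starting at `s`, staying in `S` except
for the last vertex, and ending at a terminal vertex in `S'`, of the path cost plus the
heuristic value of the terminal vertex. -/
def CstarOpt (G : GCS V n) (h : V → ℝ) (s : V) (S S' : Finset V) : EReal :=
  sInf {c : EReal | ∃ (k : ℕ) (v : ℕ → V) (x : ℕ → EuclideanSpace ℝ (Fin n)),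
    G.IsPathOn k v x ∧ v 0 = s ∧ (∀ i, i < k - 1 → v i ∈ S) ∧ v (k - 1) ∈ S' ∧
    c = ((pathCost k x + h (v (k - 1)) : ℝ) : EReal)}

/-- The edge set `Ē` of the subgraph used by SPP*-GCS: edges leaving `S` into `S ∪ S'`. -/
def Ebar (G : GCS V n) (S S' : Finset V) : Finset (V × V) :=
  G.E.filter fun e => e.1 ∈ S ∧ e.2 ∈ S ∪ S'

end GCS

/-- The perspective `X̄ = {(x, λ) : λ ≥ 0, x ∈ λX}` of a set `X ⊆ ℝ^n`. -/
def persp {n : ℕ} (X : Set (EuclideanSpace ℝ (Fin n))) :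
    Set (EuclideanSpace ℝ (Fin n) × ℝ) :=
  {p | 0 ≤ p.2 ∧ p.1 ∈ p.2 • X}

namespace GCS

variable {V : Type*} {n : ℕ}

/-- Feasibility for the convex relaxation of SPP*-GCS on `(S, S')`. -/
def RelaxFeasible (G : GCS V n) (s : V) (S S' : Finset V)
    (y : V × V → ℝ) (α : V → ℝ) (z z' : V × V → EuclideanSpace ℝ (Fin n)) : Prop :=
  (∀ e ∈ G.Ebar S S', y e ∈ Set.Icc (0 : ℝ) 1) ∧
  (∀ v ∈ S', α v ∈ Set.Icc (0 : ℝ) 1) ∧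
  (∑ v ∈ S', α v) = 1 ∧
  (∑ e ∈ (G.Ebar S S').filter fun e => e.1 = s, y e) = 1 ∧
  (∀ v ∈ S', (∑ e ∈ (G.Ebar S S').filter fun e => e.2 = v, y e) = α v) ∧
  (∀ v ∈ S, v ≠ s →
    (∑ e ∈ (G.Ebar S S').filter fun e => e.2 = v, z' e)
      = (∑ e ∈ (G.Ebar S S').filter fun e => e.1 = v, z e) ∧
    (∑ e ∈ (G.Ebar S S').filter fun e => e.2 = v, y e)
      = (∑ e ∈ (G.Ebar S S').filter fun e => e.1 = v, y e)) ∧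
  (∀ e ∈ G.Ebar S S', (z e, y e) ∈ persp (G.X e.1) ∧ (z' e, y e) ∈ persp (G.X e.2))

/-- The objective of the convex relaxation of SPP*-GCS. -/
def relaxObj (G : GCS V n) (h : V → ℝ) (S S' : Finset V)
    (y : V × V → ℝ) (α : V → ℝ) (z z' : V × V → EuclideanSpace ℝ (Fin n)) : ℝ :=
  (∑ e ∈ G.Ebar S S', ‖z e - z' e‖) + ∑ v ∈ S', α v * h v

/-- `R*_opt(S,S')`: the optimal value of the convex relaxation of SPP*-GCS. -/
def RstarOpt (G : GCS V n) (h : V → ℝ) (s : V) (S S' : Finset V) : EReal :=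
  sInf {c : EReal | ∃ y α z z', G.RelaxFeasible s S S' y α z z' ∧
    c = ((G.relaxObj h S S' y α z z' : ℝ) : EReal)}

/-- The optimal value of the MICP for SPP*-GCS (the relaxation with binary `y` and `α`). -/
def MICPval (G : GCS V n) (h : V → ℝ) (s : V) (S S' : Finset V) : EReal :=
  sInf {c : EReal | ∃ y α z z', G.RelaxFeasible s S S' y α z z' ∧
    (∀ e ∈ G.Ebar S S', y e = 0 ∨ y e = 1) ∧
    (∀ v ∈ S', α v = 0 ∨ α v = 1) ∧
    c = ((G.relaxObj h S S' y α z z' : ℝ) : EReal)}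

end GCS

end

noncomputable section AuxStmt5

variable {V : Type*} {n : ℕ}

private lemma sum_restrict {α M : Type*} [AddCommMonoid M] (A B : Finset α) (f : α → M)
    (hf : ∀ e ∉ B, f e = 0) : ∑ e ∈ A, f e = ∑ e ∈ A ∩ B, f e := by
  classical
  refine (Finset.sum_subset Finset.inter_subset_left fun e hA hn => ?_).symm
  exact hf e fun hB => hn (Finset.mem_inter.mpr ⟨hA, hB⟩)

private lemma tele (x : ℕ → EuclideanSpace ℝ (Fin n)) :
    ∀ q p, p ≤ q → ‖x p - x q‖ ≤ ∑ t ∈ Finset.Ico p q, ‖x t - x (t + 1)‖ := by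
  intro q
  induction q with
  | zero => intro p hp; obtain rfl : p = 0 := Nat.le_zero.mp hp; simp
  | succ q ih =>
    intro p hp
    rcases eq_or_lt_of_le hp with rfl | hlt
    · simp
    · have hpq : p ≤ q := Nat.lt_succ_iff.mp hlt
      calc ‖x p - x (q+1)‖ ≤ ‖x p - x q‖ + ‖x q - x (q+1)‖ :=
            norm_sub_le_norm_sub_add_norm_sub _ _ _
        _ ≤ (∑ t ∈ Finset.Ico p q, ‖x t - x (t+1)‖) + ‖x q - x (q+1)‖ :=
            add_le_add_left (ih p hpq) _
        _ = ∑ t ∈ Finset.Ico p (q+1), ‖x t - x (t+1)‖ := (Finset.sum_Ico_succ_top hpq _).symm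

private lemma mono_reindex (x : ℕ → EuclideanSpace ℝ (Fin n)) (g : ℕ → ℕ) (hg : Monotone g)
    (m : ℕ) :
    ∑ t ∈ Finset.range m, ‖x (g t) - x (g (t+1))‖ ≤ ∑ t ∈ Finset.Ico (g 0) (g m), ‖x t - x (t+1)‖ := by
  induction m with
  | zero => simp
  | succ m ih =>
    rw [Finset.sum_range_succ,
      ← Finset.sum_Ico_consecutive _ (hg (Nat.zero_le m)) (hg (Nat.le_succ m))]
    exact add_le_add ih (tele x (g (m+1)) (g m) (hg (Nat.le_succ m)))

def pEdge (v : ℕ → V) (i : ℕ) : V × V := (v i, v (i+1))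

def pEdges (v : ℕ → V) (j : ℕ) : Finset (V × V) := (Finset.range j).image (pEdge v)

lemma mem_pEdges {v : ℕ → V} {j : ℕ} {e : V × V} :
    e ∈ pEdges v j ↔ ∃ i, i < j ∧ pEdge v i = e := by
  simp [pEdges, Finset.mem_image]

def yF (v : ℕ → V) (j : ℕ) : V × V → ℝ := fun e => if e ∈ pEdges v j then 1 else 0

def aF (v : ℕ → V) (j : ℕ) : V → ℝ := fun w => if w = v j then 1 else 0

def zF (v : ℕ → V) (x : ℕ → EuclideanSpace ℝ (Fin n)) (j : ℕ) :
    V × V → EuclideanSpace ℝ (Fin n) :=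
  fun e => if he : ∃ i, i < j ∧ pEdge v i = e then x he.choose else 0

def z'F (v : ℕ → V) (x : ℕ → EuclideanSpace ℝ (Fin n)) (j : ℕ) :
    V × V → EuclideanSpace ℝ (Fin n) :=
  fun e => if he : ∃ i, i < j ∧ pEdge v i = e then x (he.choose + 1) else 0

end AuxStmt5

noncomputable section KeyStmt5

private lemma key {V : Type*} [Fintype V] {n : ℕ} (G : GCS V n) (s : V) (h : V → ℝ)
    (S : Finset V) (hs : s ∈ S) :
    ∀ j : ℕ, ∀ (v : ℕ → V) (x : ℕ → EuclideanSpace ℝ (Fin n)),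
      1 ≤ j → (∀ i, i + 1 ≤ j → (v i, v (i+1)) ∈ G.E) → (∀ i, i ≤ j → x i ∈ G.X (v i)) →
      v 0 = s → (∀ i, i < j → v i ∈ S) → v j ∉ S →
      G.RstarOpt h s S (G.nbr S)
        ≤ (((∑ i ∈ Finset.range j, ‖x i - x (i+1)‖) + h (v j) : ℝ) : EReal) := by
  intro j
  induction j using Nat.strong_induction_on with
  | _ j IH =>
  intro v x hj hE hX hv0 hvS hvj
  by_cases hdup : ∃ a b, a < b ∧ b < j ∧ v a = v b
  · obtain ⟨a, b, hab, hbj, hvab⟩ := hdup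
    set δ := b - a with hδ
    set j' := j - δ with hj'def
    have h1 : a + δ = b := by omega
    have h2 : j' + δ = j := by omega
    have h3 : a ≤ j' := by omega
    have h4 : 1 ≤ j' := by omega
    set g : ℕ → ℕ := fun t => if t < a then t else t + δ with hg
    have hgm : Monotone g := by
      intro t u htu; simp only [hg]; split_ifs <;> omega
    have hgj' : g j' = j := by
      simp only [hg]; rw [if_neg (by omega)]; omega
    have hv0' : v (g 0) = s := by
      simp only [hg]
      split_ifs with h0
      · exact hv0
      · rw [show 0 + δ = b from by omega, ← hvab, show a = 0 from by omega]
        exact hv0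
    have hE' : ∀ t, t + 1 ≤ j' → (v (g t), v (g (t+1))) ∈ G.E := by
      intro t ht
      rcases lt_trichotomy (t+1) a with hlt | heq | hgt
      · simp only [hg]
        rw [if_pos (by omega), if_pos hlt]
        exact hE t (by omega)
      · simp only [hg]
        rw [if_pos (by omega), if_neg (by omega)]
        have hvb : v (t+1+δ) = v (t+1) := by
          rw [show t+1+δ = b from by omega, ← hvab, ← heq]
        rw [hvb]
        exact hE t (by omega)
      · simp only [hg]
        rw [if_neg (by omega), if_neg (by omega), show t+1+δ = (t+δ)+1 from by omega]
        exact hE (t+δ) (by omega)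
    have hX' : ∀ t, t ≤ j' → x (g t) ∈ G.X (v (g t)) :=
      fun t ht => hX (g t) (by simp only [hg]; split_ifs <;> omega)
    have hvS' : ∀ t, t < j' → v (g t) ∈ S :=
      fun t ht => hvS (g t) (by simp only [hg]; split_ifs <;> omega)
    have hvj' : v (g j') ∉ S := by rw [hgj']; exact hvj
    have hstep := IH j' (by omega) (fun t => v (g t)) (fun t => x (g t)) h4 hE' hX' hv0' hvS' hvj'
    refine hstep.trans (EReal.coe_le_coe_iff.mpr ?_)
    show (∑ t ∈ Finset.range j', ‖x (g t) - x (g (t + 1))‖) + h (v (g j')) ≤ _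
    rw [hgj']
    refine add_le_add_left ?_ _
    calc ∑ t ∈ Finset.range j', ‖x (g t) - x (g (t+1))‖
        ≤ ∑ t ∈ Finset.Ico (g 0) (g j'), ‖x t - x (t+1)‖ := mono_reindex x g hgm j'
      _ ≤ ∑ t ∈ Finset.range j, ‖x t - x (t+1)‖ := by
          rw [hgj']
          refine Finset.sum_le_sum_of_subset_of_nonneg ?_ (fun i _ _ => norm_nonneg _)
          rw [Finset.range_eq_Ico]
          exact Finset.Ico_subset_Ico (Nat.zero_le _) le_rfl
  · push_neg at hdup
    have inj : ∀ a b, a ≤ j → b ≤ j → v a = v b → a = b := by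
      intro a b ha hb hv
      by_contra hne
      rcases lt_trichotomy a b with hlt | heq | hlt
      · rcases eq_or_lt_of_le hb with rfl | hbj
        · exact hvj (hv ▸ hvS a hlt)
        · exact hdup a b hlt hbj hv
      · exact hne heq
      · rcases eq_or_lt_of_le ha with rfl | haj
        · exact hvj (by rw [hv]; exact hvS b hlt)
        · exact hdup b a hlt haj hv.symm
    have hvjS' : v j ∈ G.nbr S := by
      have hedge : (v (j-1), v j) ∈ G.E := by
        have := hE (j-1) (by omega)
        rwa [show j - 1 + 1 = j from by omega] at this
      exact Finset.mem_filter.mpr ⟨Finset.mem_univ _, hvj, v (j-1), hvS _ (by omega), hedge⟩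
    have hPET : pEdges v j ⊆ G.Ebar S (G.nbr S) := by
      intro e he
      obtain ⟨i, hi, rfl⟩ := mem_pEdges.mp he
      refine Finset.mem_filter.mpr ⟨hE i hi, hvS i hi, ?_⟩
      show v (i+1) ∈ S ∪ G.nbr S
      rcases eq_or_lt_of_le (show i+1 ≤ j from hi) with heq | hlt
      · exact Finset.mem_union_right _ (by rw [heq]; exact hvjS')
      · exact Finset.mem_union_left _ (hvS _ hlt)
    have hchoose : ∀ (i : ℕ), i < j → ∀ (he : ∃ t, t < j ∧ pEdge v t = pEdge v i),
        he.choose = i := by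
      intro i hi he
      obtain ⟨ht, hpe⟩ := he.choose_spec
      exact inj _ _ ht.le hi.le (congrArg Prod.fst hpe)
    have hzpe : ∀ i, i < j → zF v x j (pEdge v i) = x i := by
      intro i hi
      have he : ∃ t, t < j ∧ pEdge v t = pEdge v i := ⟨i, hi, rfl⟩
      simp only [zF, dif_pos he, hchoose i hi he]
    have hz'pe : ∀ i, i < j → z'F v x j (pEdge v i) = x (i+1) := by
      intro i hi
      have he : ∃ t, t < j ∧ pEdge v t = pEdge v i := ⟨i, hi, rfl⟩
      simp only [z'F, dif_pos he, hchoose i hi he]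
    have hy1 : ∀ i, i < j → yF v j (pEdge v i) = 1 :=
      fun i hi => if_pos (mem_pEdges.mpr ⟨i, hi, rfl⟩)
    have hy0 : ∀ e, e ∉ pEdges v j → yF v j e = 0 := fun e he => if_neg he
    have hz0 : ∀ e, e ∉ pEdges v j → zF v x j e = 0 :=
      fun e he => dif_neg fun hex => he (mem_pEdges.mpr hex)
    have hz'0 : ∀ e, e ∉ pEdges v j → z'F v x j e = 0 :=
      fun e he => dif_neg fun hex => he (mem_pEdges.mpr hex)
    have c1 : ∀ e ∈ G.Ebar S (G.nbr S), yF v j e ∈ Set.Icc (0:ℝ) 1 := by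
      intro e _; simp only [yF]; split_ifs <;> norm_num
    have c2 : ∀ w ∈ G.nbr S, aF v j w ∈ Set.Icc (0:ℝ) 1 := by
      intro w _; simp only [aF]; split_ifs <;> norm_num
    have c3 : (∑ w ∈ G.nbr S, aF v j w) = 1 := by
      simp only [aF]
      rw [Finset.sum_ite_eq' (G.nbr S) (v j) (fun _ => (1:ℝ)), if_pos hvjS']
    have c4 : (∑ e ∈ (G.Ebar S (G.nbr S)).filter fun e => e.1 = s, yF v j e) = 1 := by
      have hb : pEdge v 0 ∈ (G.Ebar S (G.nbr S)).filter (fun e => e.1 = s) :=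
        Finset.mem_filter.mpr ⟨hPET (mem_pEdges.mpr ⟨0, by omega, rfl⟩), hv0⟩
      refine (Finset.sum_eq_single_of_mem (pEdge v 0) hb ?_).trans (hy1 0 (by omega))
      intro e heA hne
      refine hy0 e fun hePE => hne ?_
      obtain ⟨i, hi, rfl⟩ := mem_pEdges.mp hePE
      have he1 : v i = s := (Finset.mem_filter.mp heA).2
      have hvi : v i = v 0 := by rw [hv0]; exact he1
      rw [inj i 0 hi.le (by omega) hvi]
    have c5 : ∀ w ∈ G.nbr S,
        (∑ e ∈ (G.Ebar S (G.nbr S)).filter fun e => e.2 = w, yF v j e) = aF v j w := by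
      intro w hw
      have hwS : w ∉ S := (Finset.mem_filter.mp hw).2.1
      by_cases hwj : w = v j
      · subst hwj
        have hb : pEdge v (j-1) ∈ (G.Ebar S (G.nbr S)).filter (fun e => e.2 = v j) :=
          Finset.mem_filter.mpr ⟨hPET (mem_pEdges.mpr ⟨j-1, by omega, rfl⟩),
            show v (j-1+1) = v j from by rw [show j-1+1 = j from by omega]⟩
        refine (Finset.sum_eq_single_of_mem (pEdge v (j-1)) hb ?_).trans ?_
        · intro e heA hne
          refine hy0 e fun hePE => hne ?_
          obtain ⟨i, hi, rfl⟩ := mem_pEdges.mp hePE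
          have he2 : v (i+1) = v j := (Finset.mem_filter.mp heA).2
          have : i + 1 = j := inj (i+1) j hi le_rfl he2
          rw [show i = j - 1 from by omega]
        · rw [hy1 (j-1) (by omega)]
          simp [aF]
      · refine (Finset.sum_eq_zero ?_).trans ?_
        · intro e heA
          refine hy0 e fun hePE => ?_
          obtain ⟨i, hi, rfl⟩ := mem_pEdges.mp hePE
          have he2' : v (i+1) = w := (Finset.mem_filter.mp heA).2
          rcases eq_or_lt_of_le (show i+1 ≤ j from hi) with heq | hlt
          · exact hwj (by rw [← he2', heq])
          · exact hwS (he2' ▸ hvS _ hlt)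
        · simp [aF, hwj]
    have c6 : ∀ w ∈ S, w ≠ s →
        (∑ e ∈ (G.Ebar S (G.nbr S)).filter fun e => e.2 = w, z'F v x j e)
          = (∑ e ∈ (G.Ebar S (G.nbr S)).filter fun e => e.1 = w, zF v x j e) ∧
        (∑ e ∈ (G.Ebar S (G.nbr S)).filter fun e => e.2 = w, yF v j e)
          = (∑ e ∈ (G.Ebar S (G.nbr S)).filter fun e => e.1 = w, yF v j e) := by
      intro w hwS hws
      by_cases hiw : ∃ i, i ≤ j ∧ v i = w
      · obtain ⟨i, hij, hvi⟩ := hiw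
        subst hvi
        have hi0 : 1 ≤ i := by
          rcases Nat.eq_zero_or_pos i with rfl | hpos
          · exact absurd hv0 hws
          · exact hpos
        have hij' : i < j := by
          rcases eq_or_lt_of_le hij with rfl | hlt
          · exact absurd hwS hvj
          · exact hlt
        have hbIn : pEdge v (i-1) ∈ (G.Ebar S (G.nbr S)).filter (fun e => e.2 = v i) :=
          Finset.mem_filter.mpr ⟨hPET (mem_pEdges.mpr ⟨i-1, by omega, rfl⟩),
            show v (i-1+1) = v i from by rw [show i-1+1 = i from by omega]⟩
        have hbOut : pEdge v i ∈ (G.Ebar S (G.nbr S)).filter (fun e => e.1 = v i) :=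
          Finset.mem_filter.mpr ⟨hPET (mem_pEdges.mpr ⟨i, hij', rfl⟩), rfl⟩
        have huIn : ∀ e ∈ (G.Ebar S (G.nbr S)).filter (fun e => e.2 = v i),
            e ≠ pEdge v (i-1) → e ∉ pEdges v j := by
          intro e heA hne hePE
          obtain ⟨t, ht, rfl⟩ := mem_pEdges.mp hePE
          have he2 : v (t+1) = v i := (Finset.mem_filter.mp heA).2
          have : t + 1 = i := inj (t+1) i ht hij he2
          exact hne (by rw [show t = i - 1 from by omega])
        have huOut : ∀ e ∈ (G.Ebar S (G.nbr S)).filter (fun e => e.1 = v i),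
            e ≠ pEdge v i → e ∉ pEdges v j := by
          intro e heA hne hePE
          obtain ⟨t, ht, rfl⟩ := mem_pEdges.mp hePE
          have he1 : v t = v i := (Finset.mem_filter.mp heA).2
          exact hne (by rw [inj t i ht.le hij he1])
        have hIn : (∑ e ∈ (G.Ebar S (G.nbr S)).filter fun e => e.2 = v i, z'F v x j e)
            = x i :=
          (Finset.sum_eq_single_of_mem (pEdge v (i-1)) hbIn
            (fun e he hne => hz'0 e (huIn e he hne))).trans
            (by rw [hz'pe (i-1) (by omega), show i-1+1 = i from by omega])
        have hOut : (∑ e ∈ (G.Ebar S (G.nbr S)).filter fun e => e.1 = v i, zF v x j e)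
            = x i :=
          (Finset.sum_eq_single_of_mem (pEdge v i) hbOut
            (fun e he hne => hz0 e (huOut e he hne))).trans (hzpe i hij')
        have hInY : (∑ e ∈ (G.Ebar S (G.nbr S)).filter fun e => e.2 = v i, yF v j e)
            = 1 :=
          (Finset.sum_eq_single_of_mem (pEdge v (i-1)) hbIn
            (fun e he hne => hy0 e (huIn e he hne))).trans (hy1 (i-1) (by omega))
        have hOutY : (∑ e ∈ (G.Ebar S (G.nbr S)).filter fun e => e.1 = v i, yF v j e)
            = 1 :=
          (Finset.sum_eq_single_of_mem (pEdge v i) hbOut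
            (fun e he hne => hy0 e (huOut e he hne))).trans (hy1 i hij')
        exact ⟨hIn.trans hOut.symm, hInY.trans hOutY.symm⟩
      · push_neg at hiw
        have hzIn : ∀ e ∈ (G.Ebar S (G.nbr S)).filter (fun e => e.2 = w),
            e ∉ pEdges v j := by
          intro e heA hePE
          obtain ⟨t, ht, rfl⟩ := mem_pEdges.mp hePE
          exact hiw (t+1) ht (Finset.mem_filter.mp heA).2
        have hzOut : ∀ e ∈ (G.Ebar S (G.nbr S)).filter (fun e => e.1 = w),
            e ∉ pEdges v j := by
          intro e heA hePE
          obtain ⟨t, ht, rfl⟩ := mem_pEdges.mp hePE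
          exact hiw t (by omega) (Finset.mem_filter.mp heA).2
        constructor
        · rw [Finset.sum_eq_zero (fun e he => hz'0 e (hzIn e he)),
            Finset.sum_eq_zero (fun e he => hz0 e (hzOut e he))]
        · rw [Finset.sum_eq_zero (fun e he => hy0 e (hzIn e he)),
            Finset.sum_eq_zero (fun e he => hy0 e (hzOut e he))]
    have c7 : ∀ e ∈ G.Ebar S (G.nbr S),
        (zF v x j e, yF v j e) ∈ persp (G.X e.1) ∧
        (z'F v x j e, yF v j e) ∈ persp (G.X e.2) := by
      intro e heT
      by_cases hePE : e ∈ pEdges v j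
      · obtain ⟨i, hi, rfl⟩ := mem_pEdges.mp hePE
        rw [hzpe i hi, hz'pe i hi, hy1 i hi]
        refine ⟨⟨zero_le_one, ?_⟩, ⟨zero_le_one, ?_⟩⟩
        · exact Set.mem_smul_set.mpr ⟨x i, hX i hi.le, one_smul ℝ (x i)⟩
        · exact Set.mem_smul_set.mpr ⟨x (i+1), hX (i+1) hi, one_smul ℝ (x (i+1))⟩
      · rw [hz0 e hePE, hz'0 e hePE, hy0 e hePE]
        obtain ⟨p1, hp1⟩ := G.nonempty e.1
        obtain ⟨p2, hp2⟩ := G.nonempty e.2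
        exact ⟨⟨le_refl 0, Set.mem_smul_set.mpr ⟨p1, hp1, zero_smul ℝ p1⟩⟩,
          ⟨le_refl 0, Set.mem_smul_set.mpr ⟨p2, hp2, zero_smul ℝ p2⟩⟩⟩
    have hobj : G.relaxObj h S (G.nbr S) (yF v j) (aF v j) (zF v x j) (z'F v x j)
        = (∑ i ∈ Finset.range j, ‖x i - x (i+1)‖) + h (v j) := by
      unfold GCS.relaxObj
      congr 1
      · rw [← Finset.sum_subset hPET
          (fun e hT hePE => by rw [hz0 e hePE, hz'0 e hePE, sub_zero, norm_zero]),
          pEdges, Finset.sum_image (fun a ha b hb hab =>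
            inj a b (Finset.mem_range.mp ha).le (Finset.mem_range.mp hb).le
              (congrArg Prod.fst hab))]
        exact Finset.sum_congr rfl fun i hi => by
          rw [hzpe i (Finset.mem_range.mp hi), hz'pe i (Finset.mem_range.mp hi)]
      · have hterm : ∀ w ∈ G.nbr S, aF v j w * h w = if w = v j then h w else 0 := by
          intro w _; simp only [aF]; split_ifs <;> simp
        rw [Finset.sum_congr rfl hterm, Finset.sum_ite_eq' (G.nbr S) (v j) h, if_pos hvjS']
    unfold GCS.RstarOpt
    refine sInf_le ⟨yF v j, aF v j, zF v x j, z'F v x j, ⟨c1, c2, c3, c4, c5, c6, c7⟩, ?_⟩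
    rw [hobj]

end KeyStmt5

/-- Theorem 1: For any cut-set `S` (whose neighborhood is then nonempty),
`C_opt(s,d) ≥ R*_opt(S, N_S)`. -/
theorem stmt5 {V : Type*} [Fintype V] {n : ℕ} (G : GCS V n) (s d : V) (h : V → ℝ)
    (hadm : G.Admissible d h)
    (hpath : ∃ (k : ℕ) (v : ℕ → V) (x : ℕ → EuclideanSpace ℝ (Fin n)),
      G.IsPathOn k v x ∧ v 0 = s ∧ v (k - 1) = d)
    (S : Finset V) (hs : s ∈ S) (hd : d ∉ S) :
    (G.nbr S).Nonempty ∧ G.RstarOpt h s S (G.nbr S) ≤ G.Copt s d := by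
  classical
  obtain ⟨k₀, v₀, x₀, ⟨hk₀, hE₀, hX₀⟩, hv₀0, hv₀d⟩ := hpath
  have crossing : ∀ (k : ℕ) (v : ℕ → V), 1 ≤ k →
      (∀ i, i + 1 < k → (v i, v (i+1)) ∈ G.E) → v 0 = s → v (k-1) = d →
      ∃ j, 1 ≤ j ∧ j ≤ k - 1 ∧ (∀ i, i < j → v i ∈ S) ∧ v j ∉ S ∧ v j ∈ G.nbr S := by
    intro k v hk hE hv0 hvd
    have hex : ∃ j, v j ∉ S := ⟨k-1, by rw [hvd]; exact hd⟩
    have hspec : v (Nat.find hex) ∉ S := Nat.find_spec hex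
    set j := Nat.find hex with hjdef
    have hmin : ∀ i, i < j → v i ∈ S := fun i hi => by
      by_contra hc
      exact Nat.find_min hex hi hc
    have hj1 : 1 ≤ j := by
      by_contra hcon
      apply hspec
      rw [show j = 0 from by omega, hv0]
      exact hs
    have hjk : j ≤ k - 1 := Nat.find_le (by rw [hvd]; exact hd)
    have hedge : (v (j-1), v j) ∈ G.E := by
      have := hE (j-1) (by omega)
      rwa [show j-1+1 = j from by omega] at this
    exact ⟨j, hj1, hjk, hmin, hspec,
      Finset.mem_filter.mpr ⟨Finset.mem_univ _, hspec, v (j-1), hmin _ (by omega), hedge⟩⟩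
  obtain ⟨j₀, _, _, _, _, hnbr₀⟩ := crossing k₀ v₀ hk₀ hE₀ hv₀0 hv₀d
  refine ⟨⟨v₀ j₀, hnbr₀⟩, ?_⟩
  unfold GCS.Copt
  refine le_sInf ?_
  rintro c ⟨k, v, x, ⟨hk, hE, hX⟩, hv0, hvd, rfl⟩
  obtain ⟨j, hj1, hjk, hmin, hspec, hnbr⟩ := crossing k v hk hE hv0 hvd
  have hpre := key G s h S hs j v x hj1 (fun i hi => hE i (by omega))
    (fun i hi => hX i (by omega)) hv0 hmin hspec
  have hsuf : G.Copt (v j) d ≤ ((pathCost (k - j) (fun i => x (j + i)) : ℝ) : EReal) := by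
    unfold GCS.Copt
    refine sInf_le ⟨k - j, fun i => v (j + i), fun i => x (j + i),
      ⟨by omega, fun i hi => hE (j+i) (by omega), fun i hi => hX (j+i) (by omega)⟩,
      rfl, ?_, rfl⟩
    show v (j + (k - j - 1)) = d
    rw [show j + (k - j - 1) = k - 1 from by omega, hvd]
  have hsufr : h (v j) ≤ pathCost (k - j) (fun i => x (j + i)) :=
    EReal.coe_le_coe_iff.mp ((hadm.2 (v j)).trans hsuf)
  refine hpre.trans (EReal.coe_le_coe_iff.mpr ?_)
  have hsplit : pathCost k x
      = (∑ i ∈ Finset.range j, ‖x i - x (i+1)‖) + pathCost (k - j) (fun i => x (j+i)) := by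
    unfold pathCost
    rw [show k - 1 = j + (k - j - 1) from by omega, Finset.sum_range_add]
    rfl
  rw [hsplit]
  exact add_le_add_right hsufr _
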